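/- Let K₁ > 0 and ε ∈ (0,1), and let (aₘ)_{m∈ℕ₀} be a sequence of nonnegative real numbers satisfying aₘ₊₁ ≤ aₘ + K₁(1 + aₘ^{1−ε}) for all m ∈ ℕ₀. Then for every d > 1/ε there exists a constant K₂ > 0, depending only on K₁ and d, such that aₘ₊₁ ≤ K₂ (1+m)^d (1 + a₀) for all m ∈ ℕ₀. -/
import Mathlib

lemma gronwall_aux_bernoulli (x d : ℝ) (hx : 1 ≤ x) (hd : 1 ≤ d) :
    x ^ d + d * x ^ (d - 1) ≤ (x + 1) ^ d := by
  have hx0 : (0 : ℝ) < x := lt_of_lt_of_le one_pos hx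
  have h1 : (1 : ℝ) + d * (1 / x) ≤ (1 + 1 / x) ^ d := by
    apply one_add_mul_self_le_rpow_one_add _ hd
    have : 0 ≤ 1 / x := by positivity
    linarith
  have h2 : (x + 1) ^ d = x ^ d * (1 + 1 / x) ^ d := by
    rw [← Real.mul_rpow (le_of_lt hx0) (by positivity)]
    congr 1
    field_simp
  have h3 : x ^ (d - 1) = x ^ d / x := by
    rw [Real.rpow_sub hx0, Real.rpow_one]
  have hxd : 0 < x ^ d := Real.rpow_pos_of_pos hx0 d
  rw [h2, h3]
  have := mul_le_mul_of_nonneg_left h1 (le_of_lt hxd)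
  calc x ^ d + d * (x ^ d / x) = x ^ d * (1 + d * (1 / x)) := by ring
    _ ≤ x ^ d * (1 + 1 / x) ^ d := this

/-- Grönwall-type iteration lemma (Lemma 5.1): if a nonnegative sequence satisfies
`a (m+1) ≤ a m + K₁ (1 + (a m)^(1-ε))`, then for every `d > 1/ε` there is a constant
`K₂ = K₂(K₁, d)` with `a (m+1) ≤ K₂ (1+m)^d (1 + a 0)` for all `m`. -/
theorem gronwall_iteration (K₁ : ℝ) (hK₁ : 0 < K₁) (d : ℝ) :
    ∃ K₂ : ℝ, 0 < K₂ ∧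
      ∀ ε : ℝ, ε ∈ Set.Ioo (0:ℝ) 1 → 1/ε < d →
      ∀ a : ℕ → ℝ, (∀ m : ℕ, 0 ≤ a m) →
        (∀ m : ℕ, a (m+1) ≤ a m + K₁ * (1 + a m ^ (1 - ε))) →
        ∀ m : ℕ, a (m+1) ≤ K₂ * (1 + (m:ℝ)) ^ d * (1 + a 0) := by
  set B : ℝ := max 1 ((2 * K₁ / d) ^ d) with hBdef
  have hB1 : (1 : ℝ) ≤ B := le_max_left _ _
  have hB0 : (0 : ℝ) < B := lt_of_lt_of_le one_pos hB1
  refine ⟨(2 : ℝ) ^ d * B, by positivity, ?_⟩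
  intro ε hε hεd a ha hrec m
  obtain ⟨hε0, hε1⟩ := hε
  have hd1 : 1 < d := lt_trans (by rw [lt_div_iff₀ hε0]; linarith) hεd
  have hd0 : (0 : ℝ) < d := lt_trans one_pos hd1
  have hdε : 1 / d < ε := by
    rw [div_lt_iff₀ hd0]
    rw [div_lt_iff₀ hε0] at hεd
    nlinarith
  have hdε1 : 1 < d * ε := by
    rw [div_lt_iff₀ hd0] at hdε; linarith
  set X : ℝ := 1 + a 0 with hXdef
  have hX1 : (1 : ℝ) ≤ X := by have := ha 0; simp [hXdef]; linarith
  have hX0 : (0 : ℝ) < X := lt_of_lt_of_le one_pos hX1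
  have hBd : 2 * K₁ * B ^ (1 - 1 / d) ≤ d * B := by
    have hB2 : (2 * K₁ / d) ^ d ≤ B := le_max_right _ _
    have hq0 : (0 : ℝ) ≤ 2 * K₁ / d := by positivity
    have h1 : ((2 * K₁ / d) ^ d) ^ (1 / d) ≤ B ^ (1 / d) :=
      Real.rpow_le_rpow (by positivity) hB2 (by positivity)
    rw [← Real.rpow_mul hq0, mul_one_div, div_self (ne_of_gt hd0), Real.rpow_one] at h1
    -- h1 : 2 * K₁ / d ≤ B ^ (1 / d)
    have h2 : 2 * K₁ ≤ d * B ^ (1 / d) := by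
      rw [div_le_iff₀ hd0] at h1; linarith
    have h3 := mul_le_mul_of_nonneg_right h2
      (le_of_lt (Real.rpow_pos_of_pos hB0 (1 - 1 / d)))
    calc 2 * K₁ * B ^ (1 - 1 / d) ≤ d * B ^ (1 / d) * B ^ (1 - 1 / d) := h3
      _ = d * B := by
          rw [mul_assoc, ← Real.rpow_add hB0]
          norm_num
  -- main claim by induction
  have claim : ∀ n : ℕ, a n ≤ B * (1 + (n : ℝ)) ^ d * X := by
    intro n
    induction n with
    | zero =>
        simp only [Nat.cast_zero, add_zero, Real.one_rpow]
        have h0 : a 0 ≤ X := by rw [hXdef]; linarith [ha 0]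
        nlinarith [h0, hB1, hX0]
    | succ n IH =>
        have hn1 : (1 : ℝ) ≤ 1 + (n : ℝ) := by
          have : (0:ℝ) ≤ (n:ℝ) := Nat.cast_nonneg n
          linarith
        have hn0 : (0 : ℝ) < 1 + (n : ℝ) := lt_of_lt_of_le one_pos hn1
        have hP1 : (1 : ℝ) ≤ (1 + (n : ℝ)) ^ (d - 1) :=
          Real.one_le_rpow hn1 (by linarith)
        have hP0 : (0 : ℝ) < (1 + (n : ℝ)) ^ (d - 1) := lt_of_lt_of_le one_pos hP1
        have hε' : (0 : ℝ) ≤ 1 - ε := by linarith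
        -- bound a n ^ (1 - ε)
        have key : a n ^ (1 - ε) ≤ B ^ (1 - 1 / d) * (1 + (n : ℝ)) ^ (d - 1) * X := by
          have h1 : a n ^ (1 - ε) ≤ (B * (1 + (n : ℝ)) ^ d * X) ^ (1 - ε) :=
            Real.rpow_le_rpow (ha n) IH hε'
          have h2 : (B * (1 + (n : ℝ)) ^ d * X) ^ (1 - ε)
              = B ^ (1 - ε) * ((1 + (n : ℝ)) ^ d) ^ (1 - ε) * X ^ (1 - ε) := by
            rw [Real.mul_rpow (by positivity) (le_of_lt hX0),
              Real.mul_rpow (le_of_lt hB0) (by positivity)]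
          have hBe : B ^ (1 - ε) ≤ B ^ (1 - 1 / d) :=
            Real.rpow_le_rpow_of_exponent_le hB1 (by linarith)
          have hPe : ((1 + (n : ℝ)) ^ d) ^ (1 - ε) ≤ (1 + (n : ℝ)) ^ (d - 1) := by
            rw [← Real.rpow_mul (le_of_lt hn0)]
            exact Real.rpow_le_rpow_of_exponent_le hn1 (by nlinarith)
          have hXe : X ^ (1 - ε) ≤ X := by
            calc X ^ (1 - ε) ≤ X ^ (1 : ℝ) :=
                  Real.rpow_le_rpow_of_exponent_le hX1 (by linarith)
              _ = X := Real.rpow_one X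
          calc a n ^ (1 - ε) ≤ B ^ (1 - ε) * ((1 + (n : ℝ)) ^ d) ^ (1 - ε) * X ^ (1 - ε) := by
                rw [← h2]; exact h1
            _ ≤ B ^ (1 - 1 / d) * (1 + (n : ℝ)) ^ (d - 1) * X := by
                apply mul_le_mul (mul_le_mul hBe hPe (by positivity) (by positivity))
                  hXe (by positivity) (by positivity)
        have hd1d : (0:ℝ) ≤ 1 - 1 / d := by
          have : 1 / d < 1 := by linarith
          linarith
        have hBe1 : (1 : ℝ) ≤ B ^ (1 - 1 / d) :=
          Real.one_le_rpow hB1 hd1d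
        have hBern : (1 + (n : ℝ)) ^ d + d * (1 + (n : ℝ)) ^ (d - 1)
            ≤ (1 + ((n : ℝ) + 1)) ^ d := by
          have := gronwall_aux_bernoulli (1 + (n : ℝ)) d hn1 (le_of_lt hd1)
          convert this using 2
          ring
        have hstep := hrec n
        push_cast
        -- combine everything
        set Z : ℝ := B ^ (1 - 1 / d) * (1 + (n : ℝ)) ^ (d - 1) * X with hZdef
        have hZ1 : (1 : ℝ) ≤ Z := by
          rw [hZdef]
          calc (1 : ℝ) = 1 * 1 * 1 := by ring
            _ ≤ _ := by
                apply mul_le_mul (mul_le_mul hBe1 hP1 zero_le_one (by positivity))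
                  hX1 zero_le_one (by positivity)
        have hK : K₁ * (1 + a n ^ (1 - ε)) ≤ 2 * K₁ * Z := by
          have h1 : K₁ * (a n ^ (1 - ε)) ≤ K₁ * Z :=
            mul_le_mul_of_nonneg_left key (le_of_lt hK₁)
          have h2 : K₁ * 1 ≤ K₁ * Z := mul_le_mul_of_nonneg_left hZ1 (le_of_lt hK₁)
          calc K₁ * (1 + a n ^ (1 - ε)) = K₁ * 1 + K₁ * (a n ^ (1 - ε)) := by ring
            _ ≤ K₁ * Z + K₁ * Z := add_le_add h2 h1
            _ = 2 * K₁ * Z := by ring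
        have hK2 : K₁ * (1 + a n ^ (1 - ε)) ≤ d * B * ((1 + (n : ℝ)) ^ (d - 1) * X) := by
          have h3 := mul_le_mul_of_nonneg_right hBd
            (le_of_lt (mul_pos hP0 hX0))
          have h4 : 2 * K₁ * Z = 2 * K₁ * B ^ (1 - 1 / d) * ((1 + (n : ℝ)) ^ (d - 1) * X) := by
            rw [hZdef]; ring
          calc K₁ * (1 + a n ^ (1 - ε)) ≤ 2 * K₁ * Z := hK
            _ = 2 * K₁ * B ^ (1 - 1 / d) * ((1 + (n : ℝ)) ^ (d - 1) * X) := h4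
            _ ≤ d * B * ((1 + (n : ℝ)) ^ (d - 1) * X) := h3
        have hBern2 : B * ((1 + (n : ℝ)) ^ d + d * (1 + (n : ℝ)) ^ (d - 1)) * X
            ≤ B * (1 + ((n : ℝ) + 1)) ^ d * X :=
          mul_le_mul_of_nonneg_right
            (mul_le_mul_of_nonneg_left hBern (le_of_lt hB0)) (le_of_lt hX0)
        calc a (n + 1) ≤ a n + K₁ * (1 + a n ^ (1 - ε)) := hstep
          _ ≤ B * (1 + (n : ℝ)) ^ d * X + d * B * ((1 + (n : ℝ)) ^ (d - 1) * X) := by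
              linarith [IH]
          _ = B * ((1 + (n : ℝ)) ^ d + d * (1 + (n : ℝ)) ^ (d - 1)) * X := by ring
          _ ≤ B * (1 + ((n : ℝ) + 1)) ^ d * X := hBern2
  -- conclude
  have hm1 : (1 : ℝ) ≤ 1 + (m : ℝ) := by
    have : (0:ℝ) ≤ (m:ℝ) := Nat.cast_nonneg m
    linarith
  have hm0 : (0 : ℝ) < 1 + (m : ℝ) := lt_of_lt_of_le one_pos hm1
  have h := claim (m + 1)
  push_cast at h
  have h2 : (1 + ((m : ℝ) + 1)) ^ d ≤ (2 : ℝ) ^ d * (1 + (m : ℝ)) ^ d := by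
    rw [← Real.mul_rpow (by norm_num) (le_of_lt hm0)]
    apply Real.rpow_le_rpow _ _ (le_of_lt hd0)
    · positivity
    · linarith
  calc a (m + 1) ≤ B * (1 + ((m : ℝ) + 1)) ^ d * X := h
    _ ≤ B * ((2 : ℝ) ^ d * (1 + (m : ℝ)) ^ d) * X := by
        apply mul_le_mul_of_nonneg_right _ (le_of_lt hX0)
        exact mul_le_mul_of_nonneg_left h2 (le_of_lt hB0)
    _ = (2 : ℝ) ^ d * B * (1 + (m : ℝ)) ^ d * X := by ring
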